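/- Let R be an associative ring with unity and let M be a strongly two-degree Ding projective left R-module, with defining short exact sequence 0 → M → D → M → 0 where D is Ding projective. If 0 → D → P → D₁ → 0 is a short exact sequence with P projective and D₁ Ding projective, and N is the pushout fitting in short exact sequences 0 → M → P → N → 0 and 0 → M → N → D₁ → 0, then Ext^i_R(N, F) = 0 for every integer i ≥ 1 and every flat left R-module F. -/

import Mathlib

universe u

open scoped TensorProduct DirectSum

/-- The subgroup of `E ⊗[ℤ] F` by which one quotients to obtain the balanced tensor
product `E ⊗_R F` of a right `R`-module `E` and a left `R`-module `F`. -/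
def balancedSub (R : Type u) [Ring R] (E F : Type u) [AddCommGroup E] [Module Rᵐᵒᵖ E]
    [AddCommGroup F] [Module R F] : Submodule ℤ (TensorProduct ℤ E F) :=
  Submodule.span ℤ
    {x | ∃ (r : R) (e : E) (f : F),
      x = (MulOpposite.op r • e) ⊗ₜ[ℤ] f - e ⊗ₜ[ℤ] (r • f)}

/-- The tensor product `E ⊗_R F` of a right `R`-module `E` and a left `R`-module `F`
over a possibly noncommutative ring `R`, realized as a quotient of `E ⊗[ℤ] F`. -/
def ModTensor (R : Type u) [Ring R] (E F : Type u) [AddCommGroup E] [Module Rᵐᵒᵖ E]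
    [AddCommGroup F] [Module R F] : Type u :=
  TensorProduct ℤ E F ⧸ balancedSub R E F

noncomputable instance (R : Type u) [Ring R] (E F : Type u) [AddCommGroup E] [Module Rᵐᵒᵖ E]
    [AddCommGroup F] [Module R F] : AddCommGroup (ModTensor R E F) :=
  inferInstanceAs (AddCommGroup (TensorProduct ℤ E F ⧸ balancedSub R E F))

/-- The map `E ⊗_R F → E' ⊗_R F` induced by a map `g : E → E'` of right `R`-modules. -/
noncomputable def ModTensor.mapLeft (R : Type u) [Ring R] {E E' : Type u} [AddCommGroup E]
    [Module Rᵐᵒᵖ E] [AddCommGroup E'] [Module Rᵐᵒᵖ E'] (F : Type u) [AddCommGroup F]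
    [Module R F] (g : E →ₗ[Rᵐᵒᵖ] E') : ModTensor R E F →ₗ[ℤ] ModTensor R E' F :=
  Submodule.mapQ (balancedSub R E F) (balancedSub R E' F)
    (TensorProduct.map (g.restrictScalars ℤ) LinearMap.id)
    (by
      rw [balancedSub, Submodule.span_le]
      rintro x ⟨r, e, f, rfl⟩
      refine Submodule.subset_span ⟨r, g e, f, ?_⟩
      show TensorProduct.map (g.restrictScalars ℤ) LinearMap.id
        ((MulOpposite.op r • e) ⊗ₜ[ℤ] f - e ⊗ₜ[ℤ] (r • f)) = _
      simp [map_sub, TensorProduct.map_tmul, map_smul])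

/-- The map `E ⊗_R F → E ⊗_R F'` induced by a map `f : F → F'` of left `R`-modules. -/
noncomputable def ModTensor.mapRight (R : Type u) [Ring R] (E : Type u) [AddCommGroup E]
    [Module Rᵐᵒᵖ E] {F F' : Type u} [AddCommGroup F] [Module R F] [AddCommGroup F']
    [Module R F'] (f : F →ₗ[R] F') : ModTensor R E F →ₗ[ℤ] ModTensor R E F' :=
  Submodule.mapQ (balancedSub R E F) (balancedSub R E F')
    (TensorProduct.map LinearMap.id (f.restrictScalars ℤ))
    (by
      rw [balancedSub, Submodule.span_le]
      rintro x ⟨r, e, y, rfl⟩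
      refine Submodule.subset_span ⟨r, e, f y, ?_⟩
      show TensorProduct.map LinearMap.id (f.restrictScalars ℤ)
        ((MulOpposite.op r • e) ⊗ₜ[ℤ] y - e ⊗ₜ[ℤ] (r • y)) = _
      simp [map_sub, TensorProduct.map_tmul, map_smul])

/-- A left module `F` over a (possibly noncommutative) ring `R` is flat if tensoring
with `F` preserves injectivity of maps of right `R`-modules. -/
def IsFlatModule (R : Type u) [Ring R] (F : Type u) [AddCommGroup F] [Module R F] : Prop :=
  ∀ (E E' : Type u) [AddCommGroup E] [Module Rᵐᵒᵖ E] [AddCommGroup E'] [Module Rᵐᵒᵖ E']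
    (g : E →ₗ[Rᵐᵒᵖ] E'), Function.Injective g →
      Function.Injective (ModTensor.mapLeft R F g)

/-- `Ext^i_R(M, L) = 0`, expressed using the `Ext` functor on the category of left
`R`-modules (with its `ℤ`-linear structure). -/
def ExtIsZero (R : Type u) [Ring R] (i : ℕ) (M L : Type u) [AddCommGroup M] [Module R M]
    [AddCommGroup L] [Module R L] : Prop :=
  Subsingleton ((((_root_.Ext ℤ (ModuleCat.{u} R) i).obj
    (Opposite.op (ModuleCat.of R M))).obj (ModuleCat.of R L)) : Type u)

/-- `FlatDimLE R n L` means the left `R`-module `L` admits a flat resolution of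
length at most `n`. -/
def FlatDimLE (R : Type u) [Ring R] : ℕ → ModuleCat.{u} R → Prop
  | 0, L => IsFlatModule R L
  | n + 1, L =>
    ∃ (F K : ModuleCat.{u} R) (ι : (K : Type u) →ₗ[R] F) (π : (F : Type u) →ₗ[R] L),
      IsFlatModule R F ∧ Function.Injective ι ∧ Function.Surjective π ∧
      Function.Exact ι π ∧ FlatDimLE R n K

/-- A left `R`-module `L` has finite flat dimension if it admits a finite resolution
by flat modules. -/
def HasFiniteFlatDimension (R : Type u) [Ring R] (L : Type u) [AddCommGroup L]
    [Module R L] : Prop :=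
  ∃ n : ℕ, FlatDimLE R n (ModuleCat.of R L)

/-- A left `R`-module `M` is Ding projective if there is an exact sequence
`⋯ → P₁ → P₀ → P₋₁ → P₋₂ → ⋯` of projective modules with `M ≅ ker (P₀ → P₋₁)`
which stays exact under `Hom_R(-, F)` for every flat module `F`. -/
def IsDingProjective (R : Type u) [Ring R] (M : Type u) [AddCommGroup M] [Module R M] : Prop :=
  ∃ (P : ℤ → ModuleCat.{u} R) (d : ∀ n : ℤ, (P (n + 1) : Type u) →ₗ[R] P n),
    (∀ n, Module.Projective R (P n)) ∧
    (∀ n, Function.Exact (d (n + 1)) (d n)) ∧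
    (∀ (F : Type u) [AddCommGroup F] [Module R F], IsFlatModule R F →
      ∀ n : ℤ, Function.Exact
        (fun g : (P n : Type u) →ₗ[R] F => g ∘ₗ d n)
        (fun g : (P (n + 1) : Type u) →ₗ[R] F => g ∘ₗ d (n + 1))) ∧
    Nonempty (M ≃ₗ[R] LinearMap.ker (d (-1)))

/-- A left `R`-module `M` is two-degree Ding projective if there is an exact sequence
`⋯ → D₁ → D₀ → D₋₁ → D₋₂ → ⋯` of Ding projective modules with `M ≅ ker (D₀ → D₋₁)`
which stays exact under `Hom_R(-, F)` for every flat module `F`. -/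
def IsTwoDegreeDingProjective (R : Type u) [Ring R] (M : Type u) [AddCommGroup M]
    [Module R M] : Prop :=
  ∃ (D : ℤ → ModuleCat.{u} R) (d : ∀ n : ℤ, (D (n + 1) : Type u) →ₗ[R] D n),
    (∀ n, IsDingProjective R (D n)) ∧
    (∀ n, Function.Exact (d (n + 1)) (d n)) ∧
    (∀ (F : Type u) [AddCommGroup F] [Module R F], IsFlatModule R F →
      ∀ n : ℤ, Function.Exact
        (fun g : (D n : Type u) →ₗ[R] F => g ∘ₗ d n)
        (fun g : (D (n + 1) : Type u) →ₗ[R] F => g ∘ₗ d (n + 1))) ∧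
    Nonempty (M ≃ₗ[R] LinearMap.ker (d (-1)))

/-- A left `R`-module `M` is strongly two-degree Ding projective if there is an exact
sequence `⋯ →f D →f D →f D →f ⋯` with `D` Ding projective and a single map `f`, with
`M ≅ ker f`, which stays exact under `Hom_R(-, F)` for every flat module `F`. -/
def IsStronglyTwoDegreeDingProjective (R : Type u) [Ring R] (M : Type u) [AddCommGroup M]
    [Module R M] : Prop :=
  ∃ (D : ModuleCat.{u} R) (f : (D : Type u) →ₗ[R] D),
    IsDingProjective R D ∧
    Function.Exact f f ∧
    (∀ (F : Type u) [AddCommGroup F] [Module R F], IsFlatModule R F →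
      Function.Exact
        (fun g : (D : Type u) →ₗ[R] F => g ∘ₗ f)
        (fun g : (D : Type u) →ₗ[R] F => g ∘ₗ f)) ∧
    Nonempty (M ≃ₗ[R] LinearMap.ker f)

/-- A left `R`-module `M` is Gorenstein projective if there is an exact sequence
`⋯ → P₁ → P₀ → P₋₁ → P₋₂ → ⋯` of projective modules with `M ≅ ker (P₀ → P₋₁)`
which stays exact under `Hom_R(-, Q)` for every projective module `Q`. -/
def IsGorensteinProjective (R : Type u) [Ring R] (M : Type u) [AddCommGroup M]
    [Module R M] : Prop :=
  ∃ (P : ℤ → ModuleCat.{u} R) (d : ∀ n : ℤ, (P (n + 1) : Type u) →ₗ[R] P n),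
    (∀ n, Module.Projective R (P n)) ∧
    (∀ n, Function.Exact (d (n + 1)) (d n)) ∧
    (∀ (Q : Type u) [AddCommGroup Q] [Module R Q], Module.Projective R Q →
      ∀ n : ℤ, Function.Exact
        (fun g : (P n : Type u) →ₗ[R] Q => g ∘ₗ d n)
        (fun g : (P (n + 1) : Type u) →ₗ[R] Q => g ∘ₗ d (n + 1))) ∧
    Nonempty (M ≃ₗ[R] LinearMap.ker (d (-1)))

/-- A left `R`-module `H` is Gorenstein flat if there is an exact sequence
`⋯ → F₁ → F₀ → F₋₁ → F₋₂ → ⋯` of flat modules with `H ≅ ker (F₀ → F₋₁)` which stays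
exact under `E ⊗_R -` for every injective right `R`-module `E`. -/
def IsGorensteinFlat (R : Type u) [Ring R] (H : Type u) [AddCommGroup H] [Module R H] : Prop :=
  ∃ (F : ℤ → ModuleCat.{u} R) (d : ∀ n : ℤ, (F (n + 1) : Type u) →ₗ[R] F n),
    (∀ n, IsFlatModule R (F n)) ∧
    (∀ n, Function.Exact (d (n + 1)) (d n)) ∧
    (∀ (E : Type u) [AddCommGroup E] [Module Rᵐᵒᵖ E], Module.Injective Rᵐᵒᵖ E →
      ∀ n : ℤ, Function.Exact
        (ModTensor.mapRight R E (d (n + 1)))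
        (ModTensor.mapRight R E (d n))) ∧
    Nonempty (H ≃ₗ[R] LinearMap.ker (d (-1)))

/-- A left `R`-module `E` is FP-injective if `Ext¹_R(F, E) = 0` for every finitely
presented module `F`. -/
def IsFPInjective (R : Type u) [Ring R] (E : Type u) [AddCommGroup E] [Module R E] : Prop :=
  ∀ (F : Type u) [AddCommGroup F] [Module R F], Module.FinitePresentation R F →
    ExtIsZero R 1 F E

/-- A left `R`-module `M` is Ding injective if there is an exact sequence
`⋯ → E₁ → E₀ → E₋₁ → E₋₂ → ⋯` of injective modules with `M ≅ ker (E₀ → E₋₁)`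
which stays exact under `Hom_R(H, -)` for every FP-injective module `H`. -/
def IsDingInjective (R : Type u) [Ring R] (M : Type u) [AddCommGroup M] [Module R M] : Prop :=
  ∃ (E : ℤ → ModuleCat.{u} R) (d : ∀ n : ℤ, (E (n + 1) : Type u) →ₗ[R] E n),
    (∀ n, Module.Injective R (E n)) ∧
    (∀ n, Function.Exact (d (n + 1)) (d n)) ∧
    (∀ (H : Type u) [AddCommGroup H] [Module R H], IsFPInjective R H →
      ∀ n : ℤ, Function.Exact
        (fun g : H →ₗ[R] (E (n + 1 + 1) : Type u) => d (n + 1) ∘ₗ g)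
        (fun g : H →ₗ[R] (E (n + 1) : Type u) => d n ∘ₗ g)) ∧
    Nonempty (M ≃ₗ[R] LinearMap.ker (d (-1)))

/-- A left `R`-module `M` is two-degree Ding injective if there is an exact sequence
`⋯ → D₁ → D₀ → D₋₁ → D₋₂ → ⋯` of Ding injective modules with `M ≅ ker (D₀ → D₋₁)`
which stays exact under `Hom_R(H, -)` for every FP-injective module `H`. -/
def IsTwoDegreeDingInjective (R : Type u) [Ring R] (M : Type u) [AddCommGroup M]
    [Module R M] : Prop :=
  ∃ (D : ℤ → ModuleCat.{u} R) (d : ∀ n : ℤ, (D (n + 1) : Type u) →ₗ[R] D n),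
    (∀ n, IsDingInjective R (D n)) ∧
    (∀ n, Function.Exact (d (n + 1)) (d n)) ∧
    (∀ (H : Type u) [AddCommGroup H] [Module R H], IsFPInjective R H →
      ∀ n : ℤ, Function.Exact
        (fun g : H →ₗ[R] (D (n + 1 + 1) : Type u) => d (n + 1) ∘ₗ g)
        (fun g : H →ₗ[R] (D (n + 1) : Type u) => d n ∘ₗ g)) ∧
    Nonempty (M ≃ₗ[R] LinearMap.ker (d (-1)))

section Helpers
variable {R : Type u} [Ring R]
variable {A B C F Y : Type*} [AddCommGroup A] [Module R A] [AddCommGroup B] [Module R B]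
  [AddCommGroup C] [Module R C] [AddCommGroup F] [Module R F] [AddCommGroup Y] [Module R Y]

/-- Factor a linear map through a surjection whose kernel it kills. -/
noncomputable def factorThru (p : A →ₗ[R] B) (hp : Function.Surjective p)
    (t : A →ₗ[R] C) (h : ∀ a, p a = 0 → t a = 0) : B →ₗ[R] C :=
  (LinearMap.ker p).liftQ t (fun a ha => h a ha) ∘ₗ
    (LinearMap.quotKerEquivOfSurjective p hp).symm.toLinearMap

lemma factorThru_apply (p : A →ₗ[R] B) (hp : Function.Surjective p)
    (t : A →ₗ[R] C) (h : ∀ a, p a = 0 → t a = 0) (a : A) :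
    factorThru p hp t h (p a) = t a := by
  have h1 : (LinearMap.quotKerEquivOfSurjective p hp).symm (p a) =
      Submodule.Quotient.mk a := by
    apply (LinearMap.quotKerEquivOfSurjective p hp).injective
    simp [LinearMap.quotKerEquivOfSurjective]
  simp [factorThru, h1]
  rfl

/-- Invert an injection on a map landing in its range. -/
noncomputable def pullbackAlong (i : F →ₗ[R] Y) (hi : Function.Injective i)
    (t : A →ₗ[R] Y) (h : ∀ a, t a ∈ LinearMap.range i) : A →ₗ[R] F :=
  (LinearEquiv.ofInjective i hi).symm.toLinearMap ∘ₗ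
    LinearMap.codRestrict (LinearMap.range i) t h

lemma pullbackAlong_spec (i : F →ₗ[R] Y) (hi : Function.Injective i)
    (t : A →ₗ[R] Y) (h : ∀ a, t a ∈ LinearMap.range i) (a : A) :
    i (pullbackAlong i hi t h a) = t a := by
  unfold pullbackAlong
  simp only [LinearMap.comp_apply, LinearEquiv.coe_coe]
  have := (LinearEquiv.ofInjective i hi).apply_symm_apply
    (LinearMap.codRestrict (LinearMap.range i) t h a)
  have h2 := congrArg (Subtype.val) this
  simpa [LinearEquiv.ofInjective_apply] using h2

/-- Turn a section of a short exact sequence into a retraction. -/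
noncomputable def retractionOfSection (i : F →ₗ[R] Y) (p : Y →ₗ[R] C)
    (hi : Function.Injective i) (hip : Function.Exact i p)
    (s : C →ₗ[R] Y) (hs : p ∘ₗ s = LinearMap.id) : Y →ₗ[R] F :=
  pullbackAlong i hi (LinearMap.id - s ∘ₗ p)
    (fun y => by
      have hp : p (y - s (p y)) = 0 := by
        have := LinearMap.congr_fun hs (p y)
        simp only [LinearMap.comp_apply, LinearMap.id_apply] at this
        simp [map_sub, this]
      simpa using (hip (y - s (p y))).mp hp)

lemma retractionOfSection_comp (i : F →ₗ[R] Y) (p : Y →ₗ[R] C)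
    (hi : Function.Injective i) (hip : Function.Exact i p)
    (s : C →ₗ[R] Y) (hs : p ∘ₗ s = LinearMap.id) (f : F) :
    retractionOfSection i p hi hip s hs (i f) = f := by
  apply hi
  rw [retractionOfSection, pullbackAlong_spec]
  have hpi : p (i f) = 0 := (hip (i f)).mpr ⟨f, rfl⟩
  simp [hpi]

end Helpers
section Split
variable {R : Type u} [Ring R]

/-- `X` has the splitting property against `F`: every short exact sequence
`0 → F → Y → X → 0` admits a retraction `Y → F`. -/
def SplitsOver (R : Type u) [Ring R] (F : Type u) [AddCommGroup F] [Module R F]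
    (X : Type u) [AddCommGroup X] [Module R X] : Prop :=
  ∀ (Y : Type u) [AddCommGroup Y] [Module R Y] (i : F →ₗ[R] Y) (p : Y →ₗ[R] X),
    Function.Injective i → Function.Surjective p → Function.Exact i p →
      ∃ r : Y →ₗ[R] F, r ∘ₗ i = LinearMap.id

/-- If the cokernel of an injection `u : A → B` has the splitting property against `F`,
then every map `A → F` extends along `u`. -/
lemma extend_of_splitsOver {F A B C : Type u} [AddCommGroup F] [Module R F]
    [AddCommGroup A] [Module R A] [AddCommGroup B] [Module R B] [AddCommGroup C] [Module R C]
    (u : A →ₗ[R] B) (v : B →ₗ[R] C) (hu : Function.Injective u) (hv : Function.Surjective v)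
    (huv : Function.Exact u v) (hsp : SplitsOver R F C) (g : A →ₗ[R] F) :
    ∃ g' : B →ₗ[R] F, g' ∘ₗ u = g := by
  classical
  set W : Submodule R (F × B) := LinearMap.range (LinearMap.prod g (-u)) with hW
  set Y := (F × B) ⧸ W with hY
  set i : F →ₗ[R] Y := W.mkQ ∘ₗ LinearMap.inl R F B with hi
  set p : Y →ₗ[R] C := W.liftQ (v ∘ₗ LinearMap.snd R F B)
    (by
      rintro x ⟨a, rfl⟩
      simp only [LinearMap.mem_ker, LinearMap.comp_apply, LinearMap.prod_apply, Function.prod_apply,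
        LinearMap.snd_apply, LinearMap.neg_apply, map_neg]
      rw [huv.apply_apply_eq_zero a, neg_zero]) with hp
  have hpmk : ∀ (z : F × B), p (W.mkQ z) = v z.2 := fun z => rfl
  have hiinj : Function.Injective i := by
    intro f₁ f₂ h
    have : W.mkQ (f₁ - f₂, 0) = 0 := by
      simp only [hi, LinearMap.comp_apply, LinearMap.inl_apply] at h
      rw [show ((f₁ - f₂ : F), (0 : B)) = (f₁, (0:B)) - (f₂, 0) by simp [Prod.ext_iff]]
      rw [map_sub, h, sub_self]
    rw [Submodule.mkQ_apply, Submodule.Quotient.mk_eq_zero] at this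
    obtain ⟨a, ha⟩ := this
    have ha1 : g a = f₁ - f₂ := congrArg Prod.fst ha
    have ha2 : -u a = 0 := congrArg Prod.snd ha
    have : a = 0 := hu (by simpa [neg_eq_zero] using ha2)
    rw [this, map_zero] at ha1
    exact sub_eq_zero.mp ha1.symm
  have hpsurj : Function.Surjective p := by
    intro c
    obtain ⟨b, rfl⟩ := hv c
    exact ⟨W.mkQ (0, b), hpmk _⟩
  have hexact : Function.Exact i p := by
    intro y
    constructor
    · intro hy
      obtain ⟨⟨f, b⟩, rfl⟩ := W.mkQ_surjective y
      have hvb : v b = 0 := (hpmk (f, b)).symm.trans hy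
      obtain ⟨a, ha⟩ := (huv b).mp hvb
      have key : ((f + g a, (0:B)) : F × B) - (f, b) ∈ W := by
        refine ⟨a, ?_⟩
        simp only [LinearMap.prod_apply, Function.prod_apply, LinearMap.neg_apply, Prod.mk_sub_mk,
          Prod.mk.injEq]
        constructor
        · abel
        · rw [ha]; abel
      have hq : (Submodule.Quotient.mk ((f + g a, (0:B)) : F × B) : Y) =
          Submodule.Quotient.mk (f, b) := (Submodule.Quotient.eq W).mpr key
      show W.mkQ (f, b) ∈ Set.range i
      exact ⟨f + g a, hq⟩
    · rintro ⟨f, rfl⟩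
      show p (i f) = 0
      simp only [hi, LinearMap.comp_apply, LinearMap.inl_apply]
      rw [hpmk]
      exact map_zero v
  obtain ⟨r, hr⟩ := hsp Y i p hiinj hpsurj hexact
  refine ⟨r ∘ₗ (W.mkQ ∘ₗ LinearMap.inr R F B), ?_⟩
  ext a
  have key : W.mkQ (0, u a) = i (g a) := by
    have hmem : ((0:F), u a) - (g a, (0:B)) ∈ W := by
      refine neg_mem_iff.mp ?_
      refine ⟨a, ?_⟩
      simp [Prod.ext_iff]
    have := (Submodule.Quotient.eq W).mpr hmem
    exact this
  simp only [LinearMap.comp_apply, LinearMap.inr_apply]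
  rw [key]
  exact LinearMap.congr_fun hr (g a)

end Split
section Resolution
variable {R : Type u} [Ring R]
variable (P : ℤ → ModuleCat.{u} R) (d : ∀ n : ℤ, (P (n + 1) : Type u) →ₗ[R] P n)

/-- The corestriction `P (n+1+1) → ker (d n)` of `d (n+1)`. -/
noncomputable def resCorestrict (hexact : ∀ n, Function.Exact (d (n + 1)) (d n)) (n : ℤ) :
    (P (n + 1 + 1) : Type u) →ₗ[R] LinearMap.ker (d n) :=
  LinearMap.codRestrict (LinearMap.ker (d n)) (d (n + 1))
    (fun y => LinearMap.mem_ker.mpr ((hexact n (d (n + 1) y)).mpr ⟨y, rfl⟩))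

lemma resCorestrict_surjective (hexact : ∀ n, Function.Exact (d (n + 1)) (d n)) (n : ℤ) :
    Function.Surjective (resCorestrict P d hexact n) := by
  rintro ⟨x, hx⟩
  obtain ⟨y, hy⟩ := (hexact n x).mp (LinearMap.mem_ker.mp hx)
  exact ⟨y, Subtype.ext hy⟩

lemma resCorestrict_ker (hexact : ∀ n, Function.Exact (d (n + 1)) (d n)) (n : ℤ)
    (y : (P (n + 1 + 1) : Type u)) :
    resCorestrict P d hexact n y = 0 ↔ d (n + 1) y = 0 := by
  constructor
  · intro h; exact congrArg Subtype.val h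
  · intro h; exact Subtype.ext h

/-- Extension property of the syzygies of a `Hom(-,F)`-exact complex. -/
lemma res_ext (hexact : ∀ n, Function.Exact (d (n + 1)) (d n))
    {F : Type u} [AddCommGroup F] [Module R F]
    (hhomF : ∀ n : ℤ, Function.Exact
      (fun g : (P n : Type u) →ₗ[R] F => g ∘ₗ d n)
      (fun g : (P (n + 1) : Type u) →ₗ[R] F => g ∘ₗ d (n + 1)))
    (n : ℤ) (g : (LinearMap.ker (d n) : Type u) →ₗ[R] F) :
    ∃ h : (P (n + 1) : Type u) →ₗ[R] F, ∀ x : LinearMap.ker (d n), h x = g x := by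
  set c := resCorestrict P d hexact n with hc
  have hzero : (g ∘ₗ c) ∘ₗ d (n + 1 + 1) = 0 := by
    ext z
    have : c (d (n + 1 + 1) z) = 0 := by
      rw [resCorestrict_ker]
      exact (hexact (n + 1)).apply_apply_eq_zero z
    simp [this]
  obtain ⟨h, hh⟩ := (hhomF (n + 1) (g ∘ₗ c)).mp hzero
  refine ⟨h, ?_⟩
  rintro ⟨x, hx⟩
  obtain ⟨y, hy⟩ := (hexact n x).mp (LinearMap.mem_ker.mp hx)
  have h1 : h (d (n + 1) y) = (g ∘ₗ c) y := LinearMap.congr_fun hh y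
  have h2 : c y = ⟨x, hx⟩ := Subtype.ext hy
  rw [hy] at h1
  rw [h1, LinearMap.comp_apply, h2]

/-- Lifting property of the syzygies of a `Hom(-,F)`-exact complex of projectives,
through surjections with kernel `F`. -/
lemma res_lift (hproj : ∀ n, Module.Projective R (P n))
    (hexact : ∀ n, Function.Exact (d (n + 1)) (d n))
    {F : Type u} [AddCommGroup F] [Module R F]
    (hhomF : ∀ n : ℤ, Function.Exact
      (fun g : (P n : Type u) →ₗ[R] F => g ∘ₗ d n)
      (fun g : (P (n + 1) : Type u) →ₗ[R] F => g ∘ₗ d (n + 1)))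
    (n : ℤ) {Y Z : Type u} [AddCommGroup Y] [Module R Y] [AddCommGroup Z] [Module R Z]
    (i : F →ₗ[R] Y) (q : Y →ₗ[R] Z) (hi : Function.Injective i)
    (hq : Function.Surjective q) (hiq : Function.Exact i q)
    (φ : (LinearMap.ker (d n) : Type u) →ₗ[R] Z) :
    ∃ t : (LinearMap.ker (d n) : Type u) →ₗ[R] Y, q ∘ₗ t = φ := by
  classical
  set c := resCorestrict P d hexact n with hc
  have hcsurj := resCorestrict_surjective P d hexact n
  haveI := hproj (n + 1 + 1)
  obtain ⟨h, hh⟩ := Module.projective_lifting_property q (φ ∘ₗ c) hq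
  have hmem : ∀ a : (P (n + 1 + 1) : Type u), d (n + 1) a = 0 → h a ∈ LinearMap.range i := by
    intro a ha
    have hca : c a = 0 := (resCorestrict_ker P d hexact n a).mpr ha
    have : q (h a) = 0 := by
      have := LinearMap.congr_fun hh a
      simp only [LinearMap.comp_apply] at this
      rw [this, hca, map_zero]
    exact (hiq (h a)).mp this
  set g₀ : (LinearMap.ker (d (n + 1)) : Type u) →ₗ[R] F :=
    pullbackAlong i hi (h ∘ₗ (LinearMap.ker (d (n + 1))).subtype)
      (fun x => hmem x.1 (LinearMap.mem_ker.mp x.2)) with hg₀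
  obtain ⟨eh, heh⟩ := res_ext P d hexact hhomF (n + 1) g₀
  set t₀ : (P (n + 1 + 1) : Type u) →ₗ[R] Y := h - i ∘ₗ eh with ht₀
  have hkill : ∀ a, c a = 0 → t₀ a = 0 := by
    intro a ha
    have had : d (n + 1) a = 0 := (resCorestrict_ker P d hexact n a).mp ha
    have hax : (⟨a, LinearMap.mem_ker.mpr had⟩ : LinearMap.ker (d (n + 1))) = ⟨a, _⟩ := rfl
    have h1 : eh a = g₀ ⟨a, LinearMap.mem_ker.mpr had⟩ := heh ⟨a, LinearMap.mem_ker.mpr had⟩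
    have h2 : i (g₀ ⟨a, LinearMap.mem_ker.mpr had⟩) = h a :=
      pullbackAlong_spec i hi (h ∘ₗ (LinearMap.ker (d (n + 1))).subtype) _ _
    simp only [ht₀, LinearMap.sub_apply, LinearMap.comp_apply, h1, h2, sub_self]
  refine ⟨factorThru c hcsurj t₀ hkill, ?_⟩
  ext x
  obtain ⟨y, rfl⟩ := hcsurj x
  rw [LinearMap.comp_apply, factorThru_apply]
  have hqt : q (t₀ y) = φ (c y) := by
    have h1 := LinearMap.congr_fun hh y
    simp only [LinearMap.comp_apply] at h1
    have h2 : q (i (eh y)) = 0 := (hiq (i (eh y))).mpr ⟨eh y, rfl⟩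
    simp only [ht₀, LinearMap.sub_apply, LinearMap.comp_apply, map_sub, h1, h2, sub_zero]
  exact hqt

end Resolution
section Strg
variable {R : Type u} [Ring R]

/-- Extension property along `ker f ↪ D` for the strongly two-degree structure. -/
lemma strg_ext {D F : Type u} [AddCommGroup D] [Module R D] [AddCommGroup F] [Module R F]
    (f : D →ₗ[R] D) (hff : Function.Exact f f)
    (hhomF : Function.Exact (fun g : D →ₗ[R] F => g ∘ₗ f) (fun g : D →ₗ[R] F => g ∘ₗ f))
    (g : (LinearMap.ker f : Type u) →ₗ[R] F) :
    ∃ h : D →ₗ[R] F, ∀ x : LinearMap.ker f, h x = g x := by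
  set c : D →ₗ[R] LinearMap.ker f := LinearMap.codRestrict (LinearMap.ker f) f
    (fun y => LinearMap.mem_ker.mpr (hff.apply_apply_eq_zero y)) with hc
  have hzero : (g ∘ₗ c) ∘ₗ f = 0 := by
    ext z
    have : c (f z) = 0 := Subtype.ext (hff.apply_apply_eq_zero z)
    simp [this]
  obtain ⟨h, hh⟩ := (hhomF (g ∘ₗ c)).mp hzero
  refine ⟨h, ?_⟩
  rintro ⟨x, hx⟩
  obtain ⟨y, hy⟩ := (hff x).mp (LinearMap.mem_ker.mp hx)
  have h1 : h (f y) = (g ∘ₗ c) y := LinearMap.congr_fun hh y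
  have h2 : c y = ⟨x, hx⟩ := Subtype.ext hy
  rw [hy] at h1
  rw [h1, LinearMap.comp_apply, h2]

/-- The corestriction of `f` to `ker f`. -/
noncomputable def strgCorestrict {D : Type u} [AddCommGroup D] [Module R D]
    (f : D →ₗ[R] D) (hff : Function.Exact f f) : D →ₗ[R] LinearMap.ker f :=
  LinearMap.codRestrict (LinearMap.ker f) f
    (fun y => LinearMap.mem_ker.mpr (hff.apply_apply_eq_zero y))

lemma strgCorestrict_surjective {D : Type u} [AddCommGroup D] [Module R D]
    (f : D →ₗ[R] D) (hff : Function.Exact f f) :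
    Function.Surjective (strgCorestrict f hff) := by
  rintro ⟨x, hx⟩
  obtain ⟨y, hy⟩ := (hff x).mp (LinearMap.mem_ker.mp hx)
  exact ⟨y, Subtype.ext hy⟩

lemma strgCorestrict_eq_zero_iff {D : Type u} [AddCommGroup D] [Module R D]
    (f : D →ₗ[R] D) (hff : Function.Exact f f) (y : D) :
    strgCorestrict f hff y = 0 ↔ f y = 0 :=
  ⟨fun h => congrArg Subtype.val h, fun h => Subtype.ext h⟩

end Strg

section Good
variable {R : Type u} [Ring R]

/-- The class of modules built from syzygies of complete `Hom(-,flat)`-exact complexes of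
projectives, strongly two-degree Ding projective modules, and extensions. -/
inductive Good (R : Type u) [Ring R] : ∀ (X : Type u) [AddCommGroup X] [Module R X], Prop
  | ker_res (X : Type u) [AddCommGroup X] [Module R X] (P : ℤ → ModuleCat.{u} R)
      (d : ∀ n : ℤ, (P (n + 1) : Type u) →ₗ[R] P n)
      (hproj : ∀ n, Module.Projective R (P n))
      (hexact : ∀ n, Function.Exact (d (n + 1)) (d n))
      (hhom : ∀ (F : Type u) [AddCommGroup F] [Module R F], IsFlatModule R F →
        ∀ n : ℤ, Function.Exact (fun g : (P n : Type u) →ₗ[R] F => g ∘ₗ d n)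
          (fun g : (P (n + 1) : Type u) →ₗ[R] F => g ∘ₗ d (n + 1)))
      (n : ℤ) (e : X ≃ₗ[R] LinearMap.ker (d n)) : Good R X
  | strg (X : Type u) [AddCommGroup X] [Module R X]
      (h : IsStronglyTwoDegreeDingProjective R X) : Good R X
  | extn (A X B : Type u) [AddCommGroup A] [Module R A] [AddCommGroup X] [Module R X]
      [AddCommGroup B] [Module R B] (a : A →ₗ[R] X) (b : X →ₗ[R] B)
      (ha : Function.Injective a) (hb : Function.Surjective b) (hab : Function.Exact a b)
      (hA : Good R A) (hB : Good R B) : Good R X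

lemma good_split {X : Type u} [AddCommGroup X] [Module R X] (hX : Good R X) :
    ∀ (F : Type u) [AddCommGroup F] [Module R F], IsFlatModule R F → SplitsOver R F X := by
  induction hX with
  | ker_res X P d hproj hexact hhom n e =>
    intro F _ _ hF Y _ _ i p hi hp hip
    obtain ⟨t, ht⟩ := res_lift P d hproj hexact (hhom F hF) n i p hi hp hip e.symm.toLinearMap
    set s : X →ₗ[R] Y := t ∘ₗ e.toLinearMap with hs
    have hps : p ∘ₗ s = LinearMap.id := by
      ext x
      have := LinearMap.congr_fun ht (e x)
      simp only [LinearMap.comp_apply, LinearEquiv.coe_coe] at this ⊢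
      rw [hs]
      simp only [LinearMap.comp_apply, LinearEquiv.coe_coe]
      rw [this, LinearEquiv.symm_apply_apply, LinearMap.id_apply]
    exact ⟨retractionOfSection i p hi hip s hps, by
      ext fx; simp only [LinearMap.comp_apply, LinearMap.id_apply]
      exact retractionOfSection_comp i p hi hip s hps fx⟩
  | strg X h =>
    obtain ⟨D, f, hD, hff, hhomstr, ⟨e⟩⟩ := h
    obtain ⟨P, d, hproj, hexact, hhom, ⟨eD⟩⟩ := hD
    intro F _ _ hF Y _ _ i p hi hp hip
    set cf := strgCorestrict f hff with hcf
    set fbar : (D : Type u) →ₗ[R] X := e.symm.toLinearMap ∘ₗ cf with hfbar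
    have hfbar_surj : Function.Surjective fbar := by
      intro x
      obtain ⟨y, hy⟩ := strgCorestrict_surjective f hff (e x)
      exact ⟨y, by simp only [hfbar, LinearMap.comp_apply, LinearEquiv.coe_coe, hcf, hy,
        LinearEquiv.symm_apply_apply]⟩
    obtain ⟨t0, ht0⟩ := res_lift P d hproj hexact (hhom F hF) (-1) i p hi hp hip
      (fbar ∘ₗ eD.symm.toLinearMap)
    set t : (D : Type u) →ₗ[R] Y := t0 ∘ₗ eD.toLinearMap with ht
    have hpt : ∀ x : (D : Type u), p (t x) = fbar x := by
      intro x
      have := LinearMap.congr_fun ht0 (eD x)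
      simp only [LinearMap.comp_apply, LinearEquiv.coe_coe] at this
      simp only [ht, LinearMap.comp_apply, LinearEquiv.coe_coe, this,
        LinearEquiv.symm_apply_apply]
    have hmemt : ∀ x : LinearMap.ker f, (t ∘ₗ (LinearMap.ker f).subtype) x ∈
        LinearMap.range i := by
      rintro ⟨x, hx⟩
      have h1 : fbar x = 0 := by
        have : cf x = 0 := (strgCorestrict_eq_zero_iff f hff x).mpr (LinearMap.mem_ker.mp hx)
        simp only [hfbar, LinearMap.comp_apply, LinearEquiv.coe_coe, this, map_zero]
      have h2 : p ((t ∘ₗ (LinearMap.ker f).subtype) ⟨x, hx⟩) = 0 := by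
        simp only [LinearMap.comp_apply, Submodule.coe_subtype]
        rw [hpt x, h1]
      exact (hip _).mp h2
    set g := pullbackAlong i hi (t ∘ₗ (LinearMap.ker f).subtype) hmemt with hg
    obtain ⟨gext, hgext⟩ := strg_ext f hff (hhomstr F hF) g
    set s₀ : (D : Type u) →ₗ[R] Y := t - i ∘ₗ gext with hs₀
    have hkill : ∀ a, fbar a = 0 → s₀ a = 0 := by
      intro a hfa
      have hcfa : f a = 0 := by
        have h1 : cf a = 0 := by
          apply e.symm.injective
          simpa only [hfbar, LinearMap.comp_apply, LinearEquiv.coe_coe, map_zero] using hfa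
        exact (strgCorestrict_eq_zero_iff f hff a).mp h1
      have hmem : a ∈ LinearMap.ker f := LinearMap.mem_ker.mpr hcfa
      have h2 : gext a = g ⟨a, hmem⟩ := hgext ⟨a, hmem⟩
      have h3 : i (g ⟨a, hmem⟩) = t a :=
        pullbackAlong_spec i hi (t ∘ₗ (LinearMap.ker f).subtype) hmemt ⟨a, hmem⟩
      simp only [hs₀, LinearMap.sub_apply, LinearMap.comp_apply, h2, h3, sub_self]
    set s := factorThru fbar hfbar_surj s₀ hkill with hs
    have hps : p ∘ₗ s = LinearMap.id := by
      ext x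
      obtain ⟨y, rfl⟩ := hfbar_surj x
      simp only [LinearMap.comp_apply, LinearMap.id_apply, hs]
      rw [factorThru_apply]
      have h2 : p (i (gext y)) = 0 := (hip _).mpr ⟨gext y, rfl⟩
      simp only [hs₀, LinearMap.sub_apply, LinearMap.comp_apply, map_sub, h2, sub_zero, hpt]
    exact ⟨retractionOfSection i p hi hip s hps, by
      ext fx; simp only [LinearMap.comp_apply, LinearMap.id_apply]
      exact retractionOfSection_comp i p hi hip s hps fx⟩
  | extn A X B a b ha hb hab hA hB IH_A IH_B =>
    intro F _ _ hF Y _ _ i p hi hp hip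
    set YA : Submodule R Y := Submodule.comap p (LinearMap.range a) with hYA
    have hpi0 : ∀ fx : F, p (i fx) = 0 := fun fx => (hip _).mpr ⟨fx, rfl⟩
    set i' : F →ₗ[R] YA := LinearMap.codRestrict YA i
      (fun fx => by simp only [hYA, Submodule.mem_comap, hpi0]; exact zero_mem _) with hi'
    set p' : (YA : Type u) →ₗ[R] A :=
      pullbackAlong a ha (p ∘ₗ YA.subtype) (fun z => z.2) with hp'
    have hap' : ∀ z : YA, a (p' z) = p z.1 :=
      fun z => pullbackAlong_spec a ha (p ∘ₗ YA.subtype) (fun z => z.2) z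
    have hi'inj : Function.Injective i' := fun x y hxy =>
      hi (congrArg Subtype.val hxy)
    have hp'surj : Function.Surjective p' := by
      intro x
      obtain ⟨y, hy⟩ := hp (a x)
      have hymem : y ∈ YA := by simp only [hYA, Submodule.mem_comap, hy]; exact ⟨x, rfl⟩
      exact ⟨⟨y, hymem⟩, ha (by rw [hap' ⟨y, hymem⟩]; exact hy)⟩
    have hex' : Function.Exact i' p' := by
      intro z
      constructor
      · intro hz
        have : p z.1 = 0 := by rw [← hap' z, hz, map_zero]
        obtain ⟨fx, hfx⟩ := (hip z.1).mp this
        exact ⟨fx, Subtype.ext hfx⟩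
      · rintro ⟨fx, rfl⟩
        apply ha
        rw [hap' _, map_zero]
        exact hpi0 fx
    obtain ⟨rA, hrA⟩ := IH_A F hF YA i' p' hi'inj hp'surj hex'
    have hvsurj : Function.Surjective (b ∘ₗ p) := (hb.comp hp)
    have hvexact : Function.Exact YA.subtype (b ∘ₗ p) := by
      intro y
      constructor
      · intro hy
        have : p y ∈ LinearMap.range a := (hab (p y)).mp hy
        exact ⟨⟨y, this⟩, rfl⟩
      · rintro ⟨⟨y, hy⟩, rfl⟩
        simp only [LinearMap.comp_apply, Submodule.coe_subtype]
        exact (hab _).mpr hy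
    obtain ⟨r, hr⟩ := extend_of_splitsOver YA.subtype (b ∘ₗ p) (Subtype.val_injective)
      hvsurj hvexact (IH_B F hF) rA
    refine ⟨r, ?_⟩
    ext fx
    have h1 : i fx = YA.subtype (i' fx) := rfl
    simp only [LinearMap.comp_apply, LinearMap.id_apply]
    rw [h1, ← LinearMap.comp_apply r, hr]
    exact LinearMap.congr_fun hrA fx

end Good
section Syzygy
variable {R : Type u} [Ring R]

lemma good_syzygy {X : Type u} [AddCommGroup X] [Module R X] (hX : Good R X) :
    ∃ (Q K : ModuleCat.{u} R), Module.Projective R Q ∧ Good R (K : Type u) ∧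
      ∃ (k : (K : Type u) →ₗ[R] Q) (π : (Q : Type u) →ₗ[R] X),
        Function.Injective k ∧ Function.Surjective π ∧ Function.Exact k π := by
  classical
  induction hX with
  | ker_res X P d hproj hexact hhom n e =>
    refine ⟨P (n + 1 + 1), ModuleCat.of R (LinearMap.ker (d (n + 1))), hproj (n + 1 + 1),
      Good.ker_res _ P d hproj hexact hhom (n + 1) (LinearEquiv.refl _ _), ?_⟩
    set c := resCorestrict P d hexact n with hc
    set π : (P (n + 1 + 1) : Type u) →ₗ[R] X := e.symm.toLinearMap ∘ₗ c with hπ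
    refine ⟨(LinearMap.ker (d (n + 1))).subtype, π, Subtype.val_injective, ?_, ?_⟩
    · intro x
      obtain ⟨y, hy⟩ := resCorestrict_surjective P d hexact n (e x)
      exact ⟨y, by simp only [hπ, LinearMap.comp_apply, LinearEquiv.coe_coe, hc, hy,
        LinearEquiv.symm_apply_apply]⟩
    · intro y
      constructor
      · intro hy
        have h1 : c y = 0 := by
          apply e.symm.injective
          simpa only [hπ, LinearMap.comp_apply, LinearEquiv.coe_coe, map_zero] using hy
        have h2 : d (n + 1) y = 0 := (resCorestrict_ker P d hexact n y).mp h1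
        exact ⟨⟨y, LinearMap.mem_ker.mpr h2⟩, rfl⟩
      · rintro ⟨⟨y, hy⟩, rfl⟩
        have h1 : c y = 0 := (resCorestrict_ker P d hexact n y).mpr (LinearMap.mem_ker.mp hy)
        show e.symm (c y) = 0
        rw [h1, map_zero]
  | strg X h =>
    obtain ⟨D, f, hD, hff, hhomstr, ⟨e⟩⟩ := id h
    obtain ⟨P, d, hproj, hexact, hhom, ⟨eD⟩⟩ := id hD
    set cf := strgCorestrict f hff with hcf
    set fbar : (D : Type u) →ₗ[R] X := e.symm.toLinearMap ∘ₗ cf with hfbar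
    have hfbar_surj : Function.Surjective fbar := by
      intro x
      obtain ⟨y, hy⟩ := strgCorestrict_surjective f hff (e x)
      exact ⟨y, by simp only [hfbar, LinearMap.comp_apply, LinearEquiv.coe_coe, hcf, hy,
        LinearEquiv.symm_apply_apply]⟩
    set c := resCorestrict P d hexact (-1) with hc
    set ptilde : (P (-1 + 1 + 1) : Type u) →ₗ[R] D := eD.symm.toLinearMap ∘ₗ c with hptilde
    have hptilde_surj : Function.Surjective ptilde := by
      intro x
      obtain ⟨y, hy⟩ := resCorestrict_surjective P d hexact (-1) (eD x)
      exact ⟨y, by simp only [hptilde, LinearMap.comp_apply, LinearEquiv.coe_coe, hc, hy,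
        LinearEquiv.symm_apply_apply]⟩
    have hptilde_zero : ∀ y, ptilde y = 0 ↔ d (-1 + 1) y = 0 := by
      intro y
      rw [hptilde]
      simp only [LinearMap.comp_apply, LinearEquiv.coe_coe]
      rw [show (0 : (D : Type u)) = eD.symm 0 by simp, eD.symm.injective.eq_iff]
      exact resCorestrict_ker P d hexact (-1) y
    set π : (P (-1 + 1 + 1) : Type u) →ₗ[R] X := fbar ∘ₗ ptilde with hπ
    have hπsurj : Function.Surjective π := hfbar_surj.comp hptilde_surj
    have hfbar_zero : ∀ y, fbar y = 0 ↔ f y = 0 := by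
      intro y
      rw [hfbar]
      simp only [LinearMap.comp_apply, LinearEquiv.coe_coe]
      rw [show (0 : X) = e.symm 0 by simp, e.symm.injective.eq_iff]
      exact strgCorestrict_eq_zero_iff f hff y
    refine ⟨P (-1 + 1 + 1), ModuleCat.of R (LinearMap.ker π), hproj (-1 + 1 + 1), ?_,
      (LinearMap.ker π).subtype, π, Subtype.val_injective, hπsurj, ?_⟩
    · -- Good (ker π) via extension 0 → ker (d 0) → ker π → X → 0
      have hle : LinearMap.ker (d (-1 + 1)) ≤ LinearMap.ker π := by
        intro y hy
        rw [LinearMap.mem_ker, hπ, LinearMap.comp_apply]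
        rw [(hptilde_zero y).mpr (LinearMap.mem_ker.mp hy)]
        exact map_zero fbar
      set a : (LinearMap.ker (d (-1 + 1)) : Type u) →ₗ[R] LinearMap.ker π :=
        Submodule.inclusion hle with ha
      have hmem : ∀ z : LinearMap.ker π, ptilde z.1 ∈ LinearMap.ker f := by
        rintro ⟨z, hz⟩
        have : fbar (ptilde z) = 0 := LinearMap.mem_ker.mp hz
        exact LinearMap.mem_ker.mpr ((hfbar_zero _).mp this)
      set b : (LinearMap.ker π : Type u) →ₗ[R] X := e.symm.toLinearMap ∘ₗ
        LinearMap.codRestrict (LinearMap.ker f) (ptilde ∘ₗ (LinearMap.ker π).subtype) hmem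
        with hb
      have hbapply : ∀ z : LinearMap.ker π, b z = e.symm ⟨ptilde z.1, hmem z⟩ := fun z => rfl
      have hbsurj : Function.Surjective b := by
        intro x
        obtain ⟨y, hy⟩ := hptilde_surj (e x).1
        have hyπ : y ∈ LinearMap.ker π := by
          rw [LinearMap.mem_ker, hπ, LinearMap.comp_apply, hy, (hfbar_zero _),
            ← LinearMap.mem_ker]
          exact (e x).2
        refine ⟨⟨y, hyπ⟩, ?_⟩
        rw [hbapply]
        have heq : (⟨ptilde y, hmem ⟨y, hyπ⟩⟩ : LinearMap.ker f) = e x := Subtype.ext hy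
        rw [heq, LinearEquiv.symm_apply_apply]
      have hainj : Function.Injective a := Submodule.inclusion_injective hle
      have hexab : Function.Exact a b := by
        intro z
        constructor
        · intro h0
          have h1 : ptilde z.1 = 0 := by
            have h2 : (⟨ptilde z.1, hmem z⟩ : LinearMap.ker f) = 0 := by
              apply e.symm.injective
              rw [← hbapply z]
              simpa using h0
            exact congrArg Subtype.val h2
          exact ⟨⟨z.1, LinearMap.mem_ker.mpr ((hptilde_zero z.1).mp h1)⟩, Subtype.ext rfl⟩
        · rintro ⟨⟨y, hy⟩, rfl⟩
          rw [hbapply]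
          have heq : (⟨ptilde (a ⟨y, hy⟩).1, hmem (a ⟨y, hy⟩)⟩ : LinearMap.ker f) = 0 :=
            Subtype.ext ((hptilde_zero y).mpr (LinearMap.mem_ker.mp hy))
          rw [heq, map_zero]
      exact Good.extn _ _ _ a b hainj hbsurj hexab
        (Good.ker_res _ P d hproj hexact hhom (-1 + 1) (LinearEquiv.refl _ _))
        (Good.strg _ h)
    · intro y
      constructor
      · intro hy
        exact ⟨⟨y, LinearMap.mem_ker.mpr hy⟩, rfl⟩
      · rintro ⟨⟨y, hy⟩, rfl⟩
        exact LinearMap.mem_ker.mp hy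
  | extn A X B a b ha hb hab hA hB IH_A IH_B =>
    obtain ⟨QA, KA, hQAproj, hKAgood, kA, πA, hkAinj, hπAsurj, hkπA⟩ := IH_A
    obtain ⟨QB, KB, hQBproj, hKBgood, kB, πB, hkBinj, hπBsurj, hkπB⟩ := IH_B
    haveI := hQBproj
    obtain ⟨h, hh⟩ := Module.projective_lifting_property b πB hb
    have hbh : ∀ y : (QB : Type u), b (h y) = πB y := fun y => LinearMap.congr_fun hh y
    haveI := hQAproj
    set π : (Prod (QA : Type u) (QB : Type u)) →ₗ[R] X :=
      a ∘ₗ πA ∘ₗ LinearMap.fst R _ _ + h ∘ₗ LinearMap.snd R _ _ with hπ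
    have hπapply : ∀ z : Prod (QA : Type u) (QB : Type u), π z = a (πA z.1) + h z.2 :=
      fun z => rfl
    have hπsurj : Function.Surjective π := by
      intro x
      obtain ⟨y, hy⟩ := hπBsurj (b x)
      have : b (x - h y) = 0 := by
        rw [map_sub, hbh y, hy, sub_self]
      obtain ⟨v, hv⟩ := (hab _).mp this
      obtain ⟨w, hw⟩ := hπAsurj v
      refine ⟨(w, y), ?_⟩
      rw [hπapply, hw, hv]
      abel
    refine ⟨ModuleCat.of R (Prod (QA : Type u) (QB : Type u)), ModuleCat.of R (LinearMap.ker π),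
      (inferInstance : Module.Projective R (Prod (QA : Type u) (QB : Type u))), ?_, (LinearMap.ker π).subtype, π, Subtype.val_injective, hπsurj, ?_⟩
    · -- Good (ker π) via extension 0 → KA → ker π → KB → 0
      have hmemA : ∀ x : (KA : Type u), (LinearMap.inl R (QA : Type u) (QB : Type u)) (kA x) ∈
          LinearMap.ker π := by
        intro x
        rw [LinearMap.mem_ker, LinearMap.inl_apply, hπapply]
        rw [hkπA.apply_apply_eq_zero x]
        simp
      set a' : (KA : Type u) →ₗ[R] LinearMap.ker π := LinearMap.codRestrict _
        (LinearMap.inl R _ _ ∘ₗ kA) hmemA with ha'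
      have ha'inj : Function.Injective a' := by
        intro x y hxy
        have := congrArg (fun z => (Subtype.val z).1) hxy
        exact hkAinj this
      have hmemB : ∀ z : LinearMap.ker π, z.1.2 ∈ LinearMap.range kB := by
        rintro ⟨⟨z1, z2⟩, hz⟩
        have h1 : a (πA z1) + h z2 = 0 := LinearMap.mem_ker.mp hz
        have h2 : πB z2 = 0 := by
          have := congrArg b h1
          rw [map_add, map_zero, hab.apply_apply_eq_zero (πA z1), zero_add, hbh z2] at this
          exact this
        exact (hkπB _).mp h2
      set b' : (LinearMap.ker π : Type u) →ₗ[R] KB :=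
        pullbackAlong kB hkBinj (LinearMap.snd R _ _ ∘ₗ (LinearMap.ker π).subtype) hmemB
        with hb'
      have hb'spec : ∀ z : LinearMap.ker π, kB (b' z) = z.1.2 := fun z =>
        pullbackAlong_spec kB hkBinj _ hmemB z
      have hb'surj : Function.Surjective b' := by
        intro w
        have h2 : b (h (kB w)) = 0 := by
          rw [hbh (kB w), hkπB.apply_apply_eq_zero w]
        obtain ⟨v, hv⟩ := (hab _).mp h2
        obtain ⟨v', hv'⟩ := hπAsurj (-v)
        have hmem : ((v', kB w) : Prod (QA : Type u) (QB : Type u)) ∈ LinearMap.ker π := by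
          rw [LinearMap.mem_ker, hπapply, hv', map_neg, hv]
          abel
        refine ⟨⟨(v', kB w), hmem⟩, hkBinj ?_⟩
        rw [hb'spec]
      have hexab' : Function.Exact a' b' := by
        intro z
        constructor
        · intro h0
          have hz2 : z.1.2 = 0 := by
            have := hb'spec z
            rw [h0, map_zero] at this
            exact this.symm
          have h1 : a (πA z.1.1) = 0 := by
            have := LinearMap.mem_ker.mp z.2
            rw [hπapply] at this
            rw [hz2] at this
            simpa using this
          have h2 : πA z.1.1 = 0 := ha (by rw [h1, map_zero])
          obtain ⟨x, hx⟩ := (hkπA _).mp h2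
          refine ⟨x, Subtype.ext ?_⟩
          show ((kA x, 0) : Prod (QA : Type u) (QB : Type u)) = z.1
          rw [hx, ← hz2]
        · rintro ⟨x, rfl⟩
          apply hkBinj
          rw [hb'spec, map_zero]
          rfl
      exact Good.extn _ _ _ a' b' ha'inj hb'surj hexab' hKAgood hKBgood
    · intro y
      constructor
      · intro hy
        exact ⟨⟨y, LinearMap.mem_ker.mpr hy⟩, rfl⟩
      · rintro ⟨⟨y, hy⟩, rfl⟩
        exact LinearMap.mem_ker.mp hy

end Syzygy
section Tower
open CategoryTheory
variable {R : Type u} [Ring R]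

/-- One syzygy step for a good module. -/
structure SyzStep (R : Type u) [Ring R] (X : ModuleCat.{u} R) where
  Q : ModuleCat.{u} R
  K : ModuleCat.{u} R
  proj : Module.Projective R Q
  good : Good R (K : Type u)
  k : (K : Type u) →ₗ[R] Q
  pr : (Q : Type u) →ₗ[R] X
  inj : Function.Injective k
  surj : Function.Surjective pr
  exact : Function.Exact k pr

noncomputable def syzStep (X : ModuleCat.{u} R) (h : Good R (X : Type u)) : SyzStep R X :=
  Classical.choice (by
    obtain ⟨Q, K, h1, h2, k, pr, h3, h4, h5⟩ := good_syzygy h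
    exact ⟨⟨Q, K, h1, h2, k, pr, h3, h4, h5⟩⟩)

noncomputable def tower (X0 : ModuleCat.{u} R) (h0 : Good R (X0 : Type u)) :
    ℕ → Σ' (X : ModuleCat.{u} R), Good R (X : Type u)
  | 0 => ⟨X0, h0⟩
  | n + 1 =>
    ⟨(syzStep (tower X0 h0 n).1 (tower X0 h0 n).2).K,
     (syzStep (tower X0 h0 n).1 (tower X0 h0 n).2).good⟩

variable (X0 : ModuleCat.{u} R) (h0 : Good R (X0 : Type u))

/-- The `n`-th step data. -/
noncomputable def towerStep (n : ℕ) : SyzStep R (tower X0 h0 n).1 :=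
  syzStep (tower X0 h0 n).1 (tower X0 h0 n).2

lemma tower_succ (n : ℕ) : (tower X0 h0 (n + 1)).1 = (towerStep X0 h0 n).K := rfl

/-- The chain complex of the projective resolution built from the tower. -/
noncomputable def resComplex : ChainComplex (ModuleCat.{u} R) ℕ :=
  ChainComplex.of (fun n => (towerStep X0 h0 n).Q)
    (fun n => ModuleCat.ofHom ((towerStep X0 h0 n).k ∘ₗ (towerStep X0 h0 (n + 1)).pr))
    (fun n => by
      ext x
      show (towerStep X0 h0 n).k ((towerStep X0 h0 (n + 1)).pr
        ((towerStep X0 h0 (n + 1)).k ((towerStep X0 h0 (n + 2)).pr x))) = 0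
      exact (congrArg (towerStep X0 h0 n).k ((towerStep X0 h0 (n + 1)).exact.apply_apply_eq_zero
        ((towerStep X0 h0 (n + 2)).pr x))).trans (map_zero _))

lemma resComplex_d (n : ℕ) : (resComplex X0 h0).d (n + 1) n =
    ModuleCat.ofHom ((towerStep X0 h0 n).k ∘ₗ (towerStep X0 h0 (n + 1)).pr) :=
  ChainComplex.of_d (fun n => (towerStep X0 h0 n).Q)
    (fun n => ModuleCat.ofHom ((towerStep X0 h0 n).k ∘ₗ (towerStep X0 h0 (n + 1)).pr)) n

lemma resComplex_exact (n : ℕ) (x : ((towerStep X0 h0 (n + 1)).Q : Type u)) :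
    ((towerStep X0 h0 n).k ∘ₗ (towerStep X0 h0 (n + 1)).pr) x = 0 ↔
      x ∈ LinearMap.range ((towerStep X0 h0 (n + 1)).k ∘ₗ (towerStep X0 h0 (n + 2)).pr) := by
  constructor
  · intro hx
    have h1 : (towerStep X0 h0 (n + 1)).pr x = 0 := by
      apply (towerStep X0 h0 n).inj
      exact hx.trans (map_zero (towerStep X0 h0 n).k).symm
    obtain ⟨w, hw⟩ := ((towerStep X0 h0 (n + 1)).exact x).mp h1
    obtain ⟨y, hy⟩ := (towerStep X0 h0 (n + 2)).surj w
    refine ⟨y, ?_⟩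
    show (towerStep X0 h0 (n + 1)).k ((towerStep X0 h0 (n + 2)).pr y) = x
    rw [hy, hw]
  · rintro ⟨y, rfl⟩
    show (towerStep X0 h0 n).k ((towerStep X0 h0 (n + 1)).pr
      ((towerStep X0 h0 (n + 1)).k ((towerStep X0 h0 (n + 2)).pr y))) = 0
    exact (congrArg (towerStep X0 h0 n).k ((towerStep X0 h0 (n + 1)).exact.apply_apply_eq_zero
      ((towerStep X0 h0 (n + 2)).pr y))).trans (map_zero _)

/-- The augmentation map of the resolution. -/
noncomputable def resPi :
    resComplex X0 h0 ⟶ (ChainComplex.single₀ (ModuleCat.{u} R)).obj X0 :=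
  (ChainComplex.toSingle₀Equiv _ _).symm
    ⟨ModuleCat.ofHom (towerStep X0 h0 0).pr, by
      rw [resComplex_d X0 h0 0]
      ext x
      show (towerStep X0 h0 0).pr ((towerStep X0 h0 0).k ((towerStep X0 h0 1).pr x)) = 0
      exact (towerStep X0 h0 0).exact.apply_apply_eq_zero ((towerStep X0 h0 1).pr x)⟩

lemma resPi_f_zero : (resPi X0 h0).f 0 = ModuleCat.ofHom (towerStep X0 h0 0).pr :=
  ChainComplex.toSingle₀Equiv_symm_apply_f_zero _ _

/-- The projective resolution of a good module built from the tower. -/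
noncomputable def resolution : ProjectiveResolution X0 where
  complex := resComplex X0 h0
  projective n := ((IsProjective.iff_projective.{u, u} _).mp (towerStep X0 h0 n).proj :)
  π := resPi X0 h0
  quasiIso := ⟨fun n => by
    cases n with
    | zero =>
      rw [ChainComplex.quasiIsoAt₀_iff, ShortComplex.quasiIso_iff_of_zeros']
      · have hcomp0 : ModuleCat.ofHom ((towerStep X0 h0 0).k ∘ₗ (towerStep X0 h0 1).pr) ≫
            ModuleCat.ofHom (towerStep X0 h0 0).pr = 0 := by
          ext x
          show (towerStep X0 h0 0).pr ((towerStep X0 h0 0).k ((towerStep X0 h0 1).pr x)) = 0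
          exact (towerStep X0 h0 0).exact.apply_apply_eq_zero ((towerStep X0 h0 1).pr x)
        have hex : (ShortComplex.mk _ _ hcomp0).Exact := by
          rw [ShortComplex.moduleCat_exact_iff]
          intro x hx
          have hx' : (towerStep X0 h0 0).pr x = 0 := hx
          obtain ⟨w, hw⟩ := ((towerStep X0 h0 0).exact x).mp hx'
          obtain ⟨y, hy⟩ := (towerStep X0 h0 1).surj w
          refine ⟨y, ?_⟩
          show (towerStep X0 h0 0).k ((towerStep X0 h0 1).pr y) = x
          rw [hy, hw]
        have hepi : Epi (ShortComplex.mk _ _ hcomp0).g := by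
          rw [ModuleCat.epi_iff_surjective]
          exact (towerStep X0 h0 0).surj
        refine (ShortComplex.exact_and_epi_g_iff_of_iso ?_).2 ⟨hex, hepi⟩
        refine ShortComplex.isoMk (Iso.refl _) (Iso.refl _) (Iso.refl _) ?_ ?_
        · simp only [resComplex, ShortComplex.map_X₁, ShortComplex.map_X₂, Iso.refl_hom,
            Category.id_comp, Category.comp_id]
          dsimp
          exact (resComplex_d X0 h0 0).symm
        · simp only [resComplex, Iso.refl_hom, Category.id_comp, Category.comp_id]
          dsimp
          exact (resPi_f_zero X0 h0).symm
      all_goals rfl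
    | succ n =>
      rw [quasiIsoAt_iff_exactAt']
      · rw [HomologicalComplex.exactAt_iff' _ (n + 2) (n + 1) n (by simp) (by simp)]
        rw [ShortComplex.moduleCat_exact_iff]
        have hd1 : (resComplex X0 h0).d (n + 2) (n + 1) =
            ModuleCat.ofHom ((towerStep X0 h0 (n + 1)).k ∘ₗ (towerStep X0 h0 (n + 2)).pr) :=
          ChainComplex.of_d (fun n => (towerStep X0 h0 n).Q)
            (fun n => ModuleCat.ofHom ((towerStep X0 h0 n).k ∘ₗ (towerStep X0 h0 (n + 1)).pr)) (n + 1)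
        have hd0 : (resComplex X0 h0).d (n + 1) n =
            ModuleCat.ofHom ((towerStep X0 h0 n).k ∘ₗ (towerStep X0 h0 (n + 1)).pr) :=
          ChainComplex.of_d (fun n => (towerStep X0 h0 n).Q)
            (fun n => ModuleCat.ofHom ((towerStep X0 h0 n).k ∘ₗ (towerStep X0 h0 (n + 1)).pr)) n
        intro x hx
        have hx' : ((towerStep X0 h0 n).k ∘ₗ (towerStep X0 h0 (n + 1)).pr) x = 0 := by
          have : (resComplex X0 h0).d (n + 1) n x = 0 := hx
          rwa [hd0] at this
        obtain ⟨y, hy⟩ := (resComplex_exact X0 h0 n x).mp hx'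
        refine ⟨y, ?_⟩
        show (resComplex X0 h0).d (n + 2) (n + 1) y = x
        rw [hd1]
        exact hy
      · apply ChainComplex.exactAt_succ_single_obj⟩

end Tower
section Final
open CategoryTheory CategoryTheory.Limits
variable {R : Type u} [Ring R]
variable (X0 : ModuleCat.{u} R) (h0 : Good R (X0 : Type u))

lemma resHom_exactAt (F : Type u) [AddCommGroup F] [Module R F] (hF : IsFlatModule R F)
    (m : ℕ) :
    (((resComplex X0 h0).linearYonedaObj ℤ (ModuleCat.of R F)).ExactAt (m + 1)) := by
  rw [HomologicalComplex.exactAt_iff' _ m (m + 1) (m + 2) (by simp) (by simp)]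
  rw [ShortComplex.moduleCat_exact_iff]
  intro g hg
  let gl : (towerStep X0 h0 (m + 1)).Q ⟶ ModuleCat.of R F := g
  have hg1 : (resComplex X0 h0).d (m + 2) (m + 1) ≫ gl = 0 := hg
  rw [resComplex_d X0 h0 (m + 1)] at hg1
  have hg2 : ∀ x, gl ((towerStep X0 h0 (m + 1)).k ((towerStep X0 h0 (m + 2)).pr x)) = 0 :=
    fun x => congrArg (fun φ => φ.hom x) hg1
  have hg3 : ∀ w, gl ((towerStep X0 h0 (m + 1)).k w) = 0 := by
    intro w
    obtain ⟨x, rfl⟩ := (towerStep X0 h0 (m + 2)).surj w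
    exact hg2 x
  have hker : ∀ x, (towerStep X0 h0 (m + 1)).pr x = 0 → gl x = 0 := by
    intro x hx
    obtain ⟨w, rfl⟩ := ((towerStep X0 h0 (m + 1)).exact x).mp hx
    exact hg3 w
  set gbar := factorThru (towerStep X0 h0 (m + 1)).pr (towerStep X0 h0 (m + 1)).surj
    gl.hom hker with hgbar
  obtain ⟨g', hg'⟩ := extend_of_splitsOver (towerStep X0 h0 m).k (towerStep X0 h0 m).pr
    (towerStep X0 h0 m).inj (towerStep X0 h0 m).surj (towerStep X0 h0 m).exact
    (good_split (tower X0 h0 m).2 F hF) gbar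
  refine ⟨(ModuleCat.ofHom g' : (towerStep X0 h0 m).Q ⟶ ModuleCat.of R F), ?_⟩
  have key : (resComplex X0 h0).d (m + 1) m ≫ (ModuleCat.ofHom g' : (towerStep X0 h0 m).Q ⟶ ModuleCat.of R F)
      = gl := by
    rw [resComplex_d X0 h0 m]
    ext x
    show g' ((towerStep X0 h0 m).k ((towerStep X0 h0 (m + 1)).pr x)) = gl x
    have h1 := LinearMap.congr_fun hg' ((towerStep X0 h0 (m + 1)).pr x)
    rw [hgbar] at h1
    exact h1.trans (factorThru_apply (towerStep X0 h0 (m + 1)).pr (towerStep X0 h0 (m + 1)).surj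
      gl.hom hker x)
  exact key

lemma good_ext_subsingleton (N0 : ModuleCat.{u} R) (h0 : Good R (N0 : Type u)) (i : ℕ)
    (hi : 1 ≤ i) (F : Type u) [AddCommGroup F] [Module R F] (hF : IsFlatModule R F) :
    Subsingleton ((((_root_.Ext ℤ (ModuleCat.{u} R) i).obj (Opposite.op N0)).obj
      (ModuleCat.of R F)) : Type u) := by
  obtain ⟨m, rfl⟩ : ∃ m, i = m + 1 := ⟨i - 1, by omega⟩
  have hexact := resHom_exactAt N0 h0 F hF m
  have hzero : IsZero ((((resolution N0 h0).complex).linearYonedaObj ℤ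
      (ModuleCat.of R F)).homology (m + 1)) :=
    (HomologicalComplex.exactAt_iff_isZero_homology _ _).mp hexact
  have hA : IsZero ((((_root_.Ext ℤ (ModuleCat.{u} R) (m + 1)).obj (Opposite.op N0)).obj
      (ModuleCat.of R F))) :=
    hzero.of_iso ((resolution N0 h0).isoExt (m + 1) (ModuleCat.of R F))
  set A := (((_root_.Ext ℤ (ModuleCat.{u} R) (m + 1)).obj (Opposite.op N0)).obj
      (ModuleCat.of R F)) with hAdef
  have hid : (𝟙 A : A ⟶ A) = 0 := hA.eq_of_src _ _
  constructor
  intro a b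
  have ha : ∀ x : (A : Type u), x = 0 := by
    intro x
    have h1 : (𝟙 A : A ⟶ A) x = x := rfl
    rw [hid] at h1
    exact h1.symm
  rw [ha a, ha b]

end Final
/-- Let `M` be strongly two-degree Ding projective with defining short
exact sequence `0 → M → D → M → 0`, `D` Ding projective. If `0 → D → P → D₁ → 0` is
exact with `P` projective and `D₁` Ding projective, and `N` is the pushout fitting in
short exact sequences `0 → M → P → N → 0` and `0 → M → N → D₁ → 0`, then
`Ext^i_R(N, F) = 0` for every `i ≥ 1` and every flat module `F`. -/
theorem pushout_ext_vanishing (R : Type u) [Ring R]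
    (M D P D₁ N : Type u) [AddCommGroup M] [Module R M] [AddCommGroup D] [Module R D]
    [AddCommGroup P] [Module R P] [AddCommGroup D₁] [Module R D₁]
    [AddCommGroup N] [Module R N]
    (hM : IsStronglyTwoDegreeDingProjective R M)
    -- the defining short exact sequence `0 → M → D → M → 0` with `D` Ding projective
    (ι : M →ₗ[R] D) (π : D →ₗ[R] M)
    (hι : Function.Injective ι) (hπ : Function.Surjective π) (hιπ : Function.Exact ι π)
    (hD : IsDingProjective R D)
    -- the short exact sequence `0 → D → P → D₁ → 0`
    (j : D →ₗ[R] P) (q : P →ₗ[R] D₁)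
    (hj : Function.Injective j) (hq : Function.Surjective q) (hjq : Function.Exact j q)
    (hP : Module.Projective R P) (hD₁ : IsDingProjective R D₁)
    -- the pushout `N`, fitting in `0 → M → P → N → 0` and `0 → M → N → D₁ → 0`
    (α : M →ₗ[R] P) (β : P →ₗ[R] N)
    (hα : Function.Injective α) (hβ : Function.Surjective β) (hαβ : Function.Exact α β)
    (γ : M →ₗ[R] N) (δ : N →ₗ[R] D₁)
    (hγ : Function.Injective γ) (hδ : Function.Surjective δ) (hγδ : Function.Exact γ δ)
    (hcomm₁ : α = j ∘ₗ ι) (hcomm₂ : β ∘ₗ j = γ ∘ₗ π) (hcomm₃ : δ ∘ₗ β = q) :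
    ∀ (i : ℕ), 1 ≤ i → ∀ (F : Type u) [AddCommGroup F] [Module R F],
      IsFlatModule R F → ExtIsZero R i N F := by
  intro i hi F _ _ hF
  have hGoodD1 : Good R D₁ := by
    obtain ⟨Pc, dc, hproj, hexact, hhom, ⟨e⟩⟩ := hD₁
    exact Good.ker_res _ Pc dc hproj hexact hhom (-1) e
  have hGoodN : Good R N := Good.extn M N D₁ γ δ hγ hδ hγδ (Good.strg _ hM) hGoodD1
  exact good_ext_subsingleton (ModuleCat.of R N) hGoodN i hi F hF
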